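/- Every 4-chromatic graph G containing a cycle of length 4 admits a proper 4-coloring such that every vertex of G is the beginning of a path on 4 vertices whose vertices receive all four colors. -/

import Mathlib

open SimpleGraph

namespace C4Colorful

open SimpleGraph


set_option maxRecDepth 8000

/-- nodup of 4 consecutive ZMod 4 values -/
lemma zmod4_nodup : ∀ t : ZMod 4, ([t, t+1, t+2, t+3] : List (ZMod 4)).Nodup := by decide

lemma zmod4_perm4 : ∀ a b c d : ZMod 4, a ≠ b → a ≠ c → a ≠ d → b ≠ c → b ≠ d → c ≠ d →
    ∃ f : ZMod 4 → ZMod 4, (∀ x y, f x = f y → x = y) ∧ f a = 0 ∧ f b = 1 ∧ f c = 2 ∧ f d = 3 := by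
  decide

lemma zmod4_perm2 : ∀ a b : ZMod 4, a ≠ b →
    ∃ f : ZMod 4 → ZMod 4, (∀ x y, f x = f y → x = y) ∧ f a = 0 ∧ f b = 2 := by
  decide

variable {V : Type} (G : SimpleGraph V)

/-- A proper coloring. -/
def Proper (c : V → ZMod 4) : Prop := ∀ u w, G.Adj u w → c u ≠ c w

/-- a trapped set: every vertex has a +1 successor inside -/
def IsTrap (c : V → ZMod 4) : Prop :=
  ∃ S : Set V, S.Nonempty ∧ ∀ v ∈ S, ∃ u ∈ S, G.Adj v u ∧ c u = c v + 1

lemma trap_of_cycle {c : V → ZMod 4} {u v : V}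
    (huv : G.Adj u v ∧ c v = c u + 1)
    (hvu : Relation.ReflTransGen (fun a b => G.Adj a b ∧ c b = c a + 1) v u) :
    IsTrap G c := by
  set r := fun a b => G.Adj a b ∧ c b = c a + 1 with hr
  refine ⟨{w | Relation.ReflTransGen r u w ∧ Relation.ReflTransGen r w u},
    ⟨u, ⟨Relation.ReflTransGen.refl, Relation.ReflTransGen.refl⟩⟩, ?_⟩
  rintro w ⟨hw1, hw2⟩
  rcases eq_or_ne w u with rfl | hne
  · exact ⟨v, ⟨Relation.ReflTransGen.single huv, hvu⟩, huv⟩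
  · rcases (Relation.ReflTransGen.cases_head hw2) with h | ⟨w₁, hww₁, hw₁u⟩
    · exact absurd h hne
    · exact ⟨w₁, ⟨hw1.tail hww₁, hw₁u⟩, hww₁⟩

lemma exists_height [Fintype V] {c : V → ZMod 4} (hnt : ¬ IsTrap G c) :
    ∃ h : V → ℕ, (∀ v, h v < Fintype.card V) ∧
      ∀ u v, G.Adj u v → c v = c u + 1 → h u < h v := by
  classical
  set r := fun a b => G.Adj a b ∧ c b = c a + 1 with hr
  set reach := fun v => Finset.univ.filter (fun w => Relation.ReflTransGen r v w) with hreach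
  have hmem : ∀ v, v ∈ reach v := by
    intro v; simp only [hreach, Finset.mem_filter, Finset.mem_univ, true_and]
    exact Relation.ReflTransGen.refl
  have hcardle : ∀ v, (reach v).card ≤ Fintype.card V := by
    intro v; simpa [hreach] using (Finset.card_filter_le (Finset.univ) _)
  refine ⟨fun v => Fintype.card V - (reach v).card, fun v => ?_, fun u v hadj hcol => ?_⟩
  · show Fintype.card V - (reach v).card < Fintype.card V
    have h1 : 0 < (reach v).card := Finset.card_pos.2 ⟨v, hmem v⟩
    have := hcardle v
    omega
  · show Fintype.card V - (reach u).card < Fintype.card V - (reach v).card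
    have hsub : reach v ⊆ reach u := by
      intro w hw
      simp only [hreach, Finset.mem_filter, Finset.mem_univ, true_and] at hw ⊢
      exact (Relation.ReflTransGen.single ⟨hadj, hcol⟩).trans hw
    have hunotin : u ∉ reach v := by
      intro hmemu
      simp only [hreach, Finset.mem_filter, Finset.mem_univ, true_and] at hmemu
      exact hnt (trap_of_cycle G ⟨hadj, hcol⟩ hmemu)
    have hlt : (reach v).card < (reach u).card :=
      Finset.card_lt_card (Finset.ssubset_iff_of_subset hsub |>.2 ⟨u, hmem u, hunotin⟩)
    have := hcardle u
    omega



/-- block index rounding into ZMod 4 -/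
def rnd {V : Type} (q b : ℕ) (φ : V → ℕ) (v : V) : ZMod 4 := (((φ v + 4*q - b) / q : ℕ) : ZMod 4)

lemma natCast_zmod4_eq_iff (a b : ℕ) : ((a : ZMod 4) = (b : ZMod 4)) ↔ a % 4 = b % 4 :=
  ZMod.natCast_eq_natCast_iff a b 4

lemma div8 (q t : ℕ) (hq : 1 ≤ q) (ht : t < 8*q) : t / q < 8 := by
  by_contra hcon
  push_neg at hcon
  have h1 : 8 * q ≤ (t / q) * q := Nat.mul_le_mul_right q hcon
  have h2 : (t/q) * q ≤ t := Nat.div_mul_le_self t q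
  omega

lemma rnd_ne_of_gap {V : Type} (q b : ℕ) (hq : 1 ≤ q) (φ : V → ℕ) (u v : V)
    (hu : φ u < 4*q) (hv : φ v < 4*q) (hb : b ≤ 4*q)
    (hgap : (φ u ≤ φ v ∧ q + 1 ≤ φ v - φ u ∧ φ v - φ u ≤ 3*q - 1) ∨
            (φ v ≤ φ u ∧ q + 1 ≤ φ u - φ v ∧ φ u - φ v ≤ 3*q - 1)) :
    rnd q b φ u ≠ rnd q b φ v := by
  unfold rnd
  intro hEq
  rw [natCast_zmod4_eq_iff] at hEq
  set tu := φ u + 4*q - b with htu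
  set tv := φ v + 4*q - b with htv
  have h8u : tu < 8*q := by omega
  have h8v : tv < 8*q := by omega
  have hdiff : tv + φ u = tu + φ v := by omega
  obtain ⟨du, hdueq⟩ : ∃ d, tu / q = d := ⟨_, rfl⟩
  obtain ⟨dv, hdveq⟩ : ∃ d, tv / q = d := ⟨_, rfl⟩
  obtain ⟨ru, hrueq⟩ : ∃ r, tu % q = r := ⟨_, rfl⟩
  obtain ⟨rv, hrveq⟩ : ∃ r, tv % q = r := ⟨_, rfl⟩
  rw [hdueq, hdveq] at hEq
  have hdu : q * du + ru = tu := by rw [← hdueq, ← hrueq]; exact Nat.div_add_mod tu q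
  have hdv : q * dv + rv = tv := by rw [← hdveq, ← hrveq]; exact Nat.div_add_mod tv q
  have hru : ru < q := hrueq ▸ Nat.mod_lt _ (by omega)
  have hrv : rv < q := hrveq ▸ Nat.mod_lt _ (by omega)
  have hdub : du < 8 := hdueq ▸ div8 q tu hq h8u
  have hdvb : dv < 8 := hdveq ▸ div8 q tv hq h8v
  have hcases : du = dv ∨ du = dv + 4 ∨ dv = du + 4 := by
    clear * - hEq hdub hdvb
    omega
  rcases hgap with ⟨hg1, hg2, hg3⟩ | ⟨hg1, hg2, hg3⟩ <;>
    rcases hcases with h | h | h <;>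
    [skip; (rw [h, show q * (dv + 4) = q * dv + 4*q from by ring] at hdu);
     (rw [h, show q * (du + 4) = q * du + 4*q from by ring] at hdv);
     skip; (rw [h, show q * (dv + 4) = q * dv + 4*q from by ring] at hdu);
     (rw [h, show q * (du + 4) = q * du + 4*q from by ring] at hdv)] <;>
    [rw [h] at hdu; skip; skip; rw [h] at hdu; skip; skip] <;>
    omega

lemma rnd_sep_close {V : Type} (q : ℕ) (hq : 1 ≤ q) (φ : V → ℕ) (x y : V)
    (hx : φ x < 4*q) (hy : φ y < 4*q) (hlt : φ x < φ y) (hd : φ y - φ x ≤ q - 1) :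
    rnd q (φ y) φ x ≠ rnd q (φ y) φ y := by
  unfold rnd
  intro hEq
  rw [natCast_zmod4_eq_iff] at hEq
  have hty : (φ y + 4*q - φ y) = 4*q := by omega
  rw [hty] at hEq
  have h4 : (4*q)/q = 4 := Nat.mul_div_cancel 4 (by omega)
  rw [h4] at hEq
  set tx := φ x + 4*q - φ y with htx
  have htxb : 3*q ≤ tx ∧ tx < 4*q := by omega
  have h3 : tx / q = 3 := by
    have h1 : tx / q < 4 := Nat.div_lt_of_lt_mul (by omega)
    have h2 : 3 ≤ tx / q := by
      have h5 := Nat.div_le_div_right (c := q) htxb.1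
      rwa [Nat.mul_div_cancel 3 (by omega : 0 < q)] at h5
    omega
  rw [h3] at hEq
  omega



-- new content
lemma zmod4_succ_val : ∀ x y : ZMod 4, y = x + 1 → y.val = (x.val + 1) % 4 := by decide
lemma zmod4_two_val : ∀ x y : ZMod 4, y = x + 2 → y.val = (x.val + 2) % 4 := by decide
lemma zmod4_val_inj : ∀ x y : ZMod 4, x.val = y.val → x = y := by decide
lemma zmod4_val_lt : ∀ x : ZMod 4, x.val < 4 := by decide
lemma zmod4_succ_of_val : ∀ x y : ZMod 4, y.val = (x.val + 1) % 4 → y = x + 1 := by decide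

section
variable {V : Type} {G : SimpleGraph V}

lemma phi_gap_edge (c : V → ZMod 4) (lam : V → ℕ) (q : ℕ) (hq : 1 ≤ q) (hlam : ∀ v, lam v < q)
    (harc : ∀ a b, G.Adj a b → c b = c a + 1 → lam a < lam b)
    {u v : V} (h : G.Adj u v) (hprop : c u ≠ c v) :
    ((q * (c u).val + lam u) ≤ (q * (c v).val + lam v) ∧
      q + 1 ≤ (q * (c v).val + lam v) - (q * (c u).val + lam u) ∧
      (q * (c v).val + lam v) - (q * (c u).val + lam u) ≤ 3*q - 1) ∨
    ((q * (c v).val + lam v) ≤ (q * (c u).val + lam u) ∧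
      q + 1 ≤ (q * (c u).val + lam u) - (q * (c v).val + lam v) ∧
      (q * (c u).val + lam u) - (q * (c v).val + lam v) ≤ 3*q - 1) := by
  have h1 : (c v).val = ((c u).val + 1) % 4 → lam u < lam v := fun h' =>
    harc u v h (zmod4_succ_of_val _ _ h')
  have h2 : (c u).val = ((c v).val + 1) % 4 → lam v < lam u := fun h' =>
    harc v u h.symm (zmod4_succ_of_val _ _ h')
  have hab : (c u).val ≠ (c v).val := fun h' => hprop (zmod4_val_inj _ _ h')
  have ha := zmod4_val_lt (c u)
  have hb := zmod4_val_lt (c v)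
  have hlu := hlam u
  have hlv := hlam v
  obtain ⟨a, haeq⟩ : ∃ a, (c u).val = a := ⟨_, rfl⟩
  obtain ⟨b, hbeq⟩ : ∃ b, (c v).val = b := ⟨_, rfl⟩
  simp only [haeq, hbeq] at h1 h2 hab ha hb ⊢
  clear hlam harc haeq hbeq h hprop
  interval_cases a <;> interval_cases b <;> simp_all <;> omega

lemma split_one [Fintype V] (c : V → ZMod 4) (hprop : Proper G c) (hnt : ¬ IsTrap G c)
    (x y : V) (hxy : x ≠ y) (hcxy : c x = c y) :
    ∃ c' : V → ZMod 4, Proper G c' ∧ c' x ≠ c' y := by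
  classical
  obtain ⟨h, hhb, harc⟩ := exists_height G hnt
  set n := Fintype.card V with hn
  have hn1 : 1 ≤ n := Fintype.card_pos_iff.2 ⟨x⟩
  set lam := fun v => 2 * h v + (if v = x then 1 else 0) with hlamdef
  set q := 2 * n with hqdef
  have hq : 1 ≤ q := by omega
  have hlam : ∀ v, lam v < q := by
    intro v
    have := hhb v
    simp only [hlamdef]
    split <;> omega
  have harc' : ∀ a b, G.Adj a b → c b = c a + 1 → lam a < lam b := by
    intro a b hab hc
    have := harc a b hab hc
    simp only [hlamdef]
    split <;> split <;> omega
  have hpar : lam x ≠ lam y := by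
    have hx1 : lam x = 2 * h x + 1 := by simp [hlamdef]
    have hy1 : lam y = 2 * h y := by simp [hlamdef, Ne.symm hxy]
    omega
  set φ := fun v => q * (c v).val + lam v with hφdef
  have hφb : ∀ v, φ v < 4*q := by
    intro v
    have h1 := zmod4_val_lt (c v)
    have h2 := hlam v
    have : q * (c v).val ≤ q * 3 := Nat.mul_le_mul_left q (by omega)
    simp only [hφdef]
    omega
  have hφne : φ x ≠ φ y ∧ (φ x ≤ φ y → φ y - φ x ≤ q - 1) ∧ (φ y ≤ φ x → φ x - φ y ≤ q - 1) := by
    have hval : (c x).val = (c y).val := by rw [hcxy]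
    have hx' := hlam x
    have hy' := hlam y
    simp only [hφdef, hval]
    omega
  have hgapedges : ∀ b : ℕ, b ≤ 4*q → Proper G (rnd q b φ) := by
    intro b hble u w hadj
    exact rnd_ne_of_gap q b hq φ u w (hφb u) (hφb w) hble
      (phi_gap_edge c lam q hq hlam harc' hadj (hprop u w hadj))
  rcases lt_or_gt_of_ne hφne.1 with hlt | hlt
  · exact ⟨rnd q (φ y) φ, hgapedges (φ y) (le_of_lt (hφb y)),
      rnd_sep_close q hq φ x y (hφb x) (hφb y) hlt (hφne.2.1 (le_of_lt hlt))⟩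
  · exact ⟨rnd q (φ x) φ, hgapedges (φ x) (le_of_lt (hφb x)),
      fun hcon => (rnd_sep_close q hq φ y x (hφb y) (hφb x) hlt (hφne.2.2 (le_of_lt hlt))) hcon.symm⟩

lemma split_two [Fintype V] (c : V → ZMod 4) (hprop : Proper G c) (hnt : ¬ IsTrap G c)
    (x1 x3 x2 x4 : V) (h13 : c x3 = c x1 + 2) (h24 : c x2 = c x4) (hne24 : x2 ≠ x4) :
    ∃ c' : V → ZMod 4, Proper G c' ∧ c' x1 ≠ c' x3 ∧ c' x2 ≠ c' x4 := by
  obtain ⟨h, hhb, harc⟩ := exists_height G hnt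
  set n := Fintype.card V with hn
  have hn1 : 1 ≤ n := Fintype.card_pos_iff.2 ⟨x1⟩
  set idx := fun v => ((Fintype.equivFin V) v).val with hidxdef
  have hidxb : ∀ v, idx v < n := fun v => ((Fintype.equivFin V) v).isLt
  have hidxinj : ∀ a b, idx a = idx b → a = b := by
    intro a b hab
    have := (Fintype.equivFin V).injective (Fin.ext hab : (Fintype.equivFin V) a = (Fintype.equivFin V) b)
    exact this
  set lam := fun v => n * h v + idx v with hlamdef
  set q := n * n with hqdef
  have hq : 1 ≤ q := by
    have := Nat.mul_le_mul hn1 hn1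
    simpa [hqdef] using this
  have hlam : ∀ v, lam v < q := by
    intro v
    have h1 := hhb v
    have h2 := hidxb v
    have : n * h v + n ≤ n * n := by
      calc n * h v + n = n * (h v + 1) := by ring
      _ ≤ n * n := Nat.mul_le_mul_left n (by omega)
    simp only [hlamdef, hqdef]
    omega
  have harc' : ∀ a b, G.Adj a b → c b = c a + 1 → lam a < lam b := by
    intro a b hab hc
    have hlt := harc a b hab hc
    have h2 := hidxb a
    have : n * h a + n ≤ n * h b := by
      calc n * h a + n = n * (h a + 1) := by ring
      _ ≤ n * h b := Nat.mul_le_mul_left n (by omega)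
    simp only [hlamdef]
    omega
  have hlaminj : lam x2 ≠ lam x4 := by
    intro hcon
    simp only [hlamdef] at hcon
    have i2 := hidxb x2
    have i4 := hidxb x4
    have hh : h x2 = h x4 := by
      by_contra hne
      rcases Nat.lt_or_ge (h x2) (h x4) with hlt | hge
      · have : n * h x2 + n ≤ n * h x4 := by
          calc n * h x2 + n = n * (h x2 + 1) := by ring
          _ ≤ n * h x4 := Nat.mul_le_mul_left n (by omega)
        omega
      · have hlt : h x4 < h x2 := by omega
        have : n * h x4 + n ≤ n * h x2 := by
          calc n * h x4 + n = n * (h x4 + 1) := by ring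
          _ ≤ n * h x2 := Nat.mul_le_mul_left n (by omega)
        omega
    rw [hh] at hcon
    exact hne24 (hidxinj _ _ (by omega))
  set φ := fun v => q * (c v).val + lam v with hφdef
  have hφb : ∀ v, φ v < 4*q := by
    intro v
    have h1 := zmod4_val_lt (c v)
    have h2 := hlam v
    have : q * (c v).val ≤ q * 3 := Nat.mul_le_mul_left q (by omega)
    simp only [hφdef]
    omega
  have hq4 : 1 ≤ q := hq
  -- gap for the antipodal pair x1 x3
  have hgap13 : (φ x1 ≤ φ x3 ∧ q + 1 ≤ φ x3 - φ x1 ∧ φ x3 - φ x1 ≤ 3*q - 1) ∨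
      (φ x3 ≤ φ x1 ∧ q + 1 ≤ φ x1 - φ x3 ∧ φ x1 - φ x3 ≤ 3*q - 1) := by
    have hval := zmod4_two_val _ _ h13
    have ha := zmod4_val_lt (c x1)
    have hl1 := hlam x1
    have hl3 := hlam x3
    clear_value q
    simp only [hφdef]
    obtain ⟨a, haeq⟩ : ∃ a, (c x1).val = a := ⟨_, rfl⟩
    simp only [haeq] at hval ha ⊢
    rw [hval]
    clear * - hq ha hl1 hl3
    interval_cases a <;> simp <;> omega
  have hgapedges : ∀ b : ℕ, b ≤ 4*q → Proper G (rnd q b φ) := by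
    intro b hble u w hadj
    exact rnd_ne_of_gap q b hq φ u w (hφb u) (hφb w) hble
      (phi_gap_edge c lam q hq hlam harc' hadj (hprop u w hadj))
  have hφ24 : φ x2 ≠ φ x4 ∧ (φ x2 ≤ φ x4 → φ x4 - φ x2 ≤ q - 1) ∧ (φ x4 ≤ φ x2 → φ x2 - φ x4 ≤ q - 1) := by
    have hval : (c x2).val = (c x4).val := by rw [h24]
    have hx' := hlam x2
    have hy' := hlam x4
    simp only [hφdef, hval]
    omega
  rcases lt_or_gt_of_ne hφ24.1 with hlt | hlt
  · refine ⟨rnd q (φ x4) φ, hgapedges (φ x4) (le_of_lt (hφb x4)), ?_, ?_⟩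
    · exact rnd_ne_of_gap q (φ x4) hq φ x1 x3 (hφb x1) (hφb x3) (le_of_lt (hφb x4)) hgap13
    · exact rnd_sep_close q hq φ x2 x4 (hφb x2) (hφb x4) hlt (hφ24.2.1 (le_of_lt hlt))
  · refine ⟨rnd q (φ x2) φ, hgapedges (φ x2) (le_of_lt (hφb x2)), ?_, ?_⟩
    · exact rnd_ne_of_gap q (φ x2) hq φ x1 x3 (hφb x1) (hφb x3) (le_of_lt (hφb x2)) hgap13
    · exact fun hcon => (rnd_sep_close q hq φ x4 x2 (hφb x4) (hφb x2) hlt (hφ24.2.2 (le_of_lt hlt))) hcon.symm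

end



lemma zmod4_val_cast : ∀ x : ZMod 4, ((x.val : ℕ) : ZMod 4) = x := by decide
lemma zmod4_plus1 : ∀ x y : ZMod 4, (y = x + 1) ↔ (y - x).val = 1 := by decide
lemma zmod4_ne_val : ∀ x y : ZMod 4, x ≠ y → (1 ≤ (y - x).val ∧ (y - x).val ≤ 3) := by decide
lemma zmod4_ne_of_val : ∀ x y : ZMod 4, (y - x).val ≠ 0 → x ≠ y := by decide
lemma zmod4_one_iff_three : ∀ x y : ZMod 4, x ≠ y → ((y - x).val = 1 ↔ (x - y).val = 3) := by decide

lemma int_val (k : ℤ) (h0 : 0 ≤ k) (h4 : k < 4) : (((k : ZMod 4)).val : ℤ) = k := by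
  lift k to ℕ using h0
  have : ((k : ℤ) : ZMod 4) = (k : ZMod 4) := by push_cast; rfl
  rw [this, ZMod.val_natCast]
  omega

lemma alg {V : Type} [Fintype V] (G : SimpleGraph V) (hconn : G.Connected)
    (c0 : V → ZMod 4) (hprop : Proper G c0) (htrap : IsTrap G c0) :
    ∃ c : V → ZMod 4, Proper G c ∧ ∀ v, ∃ u, G.Adj v u ∧ c u = c v + 1 := by
  classical
  obtain ⟨S, ⟨s0, hs0⟩, hStrap⟩ := htrap
  set n := Fintype.card V with hn
  have hn2 : 2 ≤ n := by
    obtain ⟨u, huS, huadj, -⟩ := hStrap s0 hs0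
    have : s0 ≠ u := G.ne_of_adj huadj
    exact Fintype.one_lt_card_iff_nontrivial.2 ⟨s0, u, this⟩
  have key : ∀ (K : ℕ) (m : V → ℕ),
      (∀ u w, G.Adj u w → 1 ≤ (((c0 w - c0 u).val : ℤ) + m w - m u) ∧
        (((c0 w - c0 u).val : ℤ) + m w - m u) ≤ 3) →
      (∀ s ∈ S, m s = 0) →
      ((∑ v, m v) + K = 2*(n-1)*n) →
      ∃ c : V → ZMod 4, Proper G c ∧ ∀ v, ∃ u, G.Adj v u ∧ c u = c v + 1 := by
    intro K
    induction K with
    | zero =>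
      intro m hwin hS0 hsum
      -- derive: either all good (done) or contradiction with sum
      set cm := fun z => c0 z + ((m z : ℕ) : ZMod 4) with hcm
      have hIval : ∀ u w, G.Adj u w → ((cm w - cm u).val : ℤ)
          = ((c0 w - c0 u).val : ℤ) + m w - m u := by
        intro u w hadj
        have hwin' := hwin u w hadj
        have hcast : cm w - cm u = (((((c0 w - c0 u).val : ℤ) + m w - m u) : ℤ) : ZMod 4) := by
          push_cast
          rw [zmod4_val_cast]
          simp only [hcm]
          ring
        rw [hcast, int_val _ (by omega) (by omega)]
      have hproper : Proper G cm := by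
        intro u w hadj
        have h1 := hIval u w hadj
        have h2 := hwin u w hadj
        exact zmod4_ne_of_val _ _ (by omega)
      by_cases hall : ∀ v, ∃ u, G.Adj v u ∧ cm u = cm v + 1
      · exact ⟨cm, hproper, hall⟩
      · exfalso
        -- bound each m w
        have hbnd : ∀ w, m w ≤ 2*(n-1) := by
          intro w
          have hstep : ∀ u w, G.Adj u w → m u ≤ m w + 2 := by
            intro u w hadj
            have hwin' := hwin u w hadj
            have hvv := zmod4_ne_val _ _ (hprop u w hadj)
            omega
          have hwal : ∀ (a : V) (p : G.Walk a s0), m a ≤ m s0 + 2 * p.length := by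
            intro a p
            clear hs0
            induction p with
            | nil => simp
            | cons h p ih =>
              simp only [SimpleGraph.Walk.length_cons]
              have := hstep _ _ h
              omega
          obtain ⟨p⟩ := hconn.preconnected w s0
          have hlen : (p.toPath : G.Walk w s0).length < n := (p.toPath.property).length_lt
          have := hwal w (p.toPath : G.Walk w s0)
          have hms0 : m s0 = 0 := hS0 s0 hs0
          omega
        -- sum bound: strict
        have hsumlt : (∑ v, m v) < 2*(n-1)*n := by
          have hle : ∀ v ∈ Finset.univ, m v ≤ 2*(n-1) := fun v _ => hbnd v
          have hstrict : m s0 < 2*(n-1) := by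
            have := hS0 s0 hs0
            omega
          calc (∑ v, m v) < ∑ _v : V, 2*(n-1) :=
                Finset.sum_lt_sum hle ⟨s0, Finset.mem_univ s0, hstrict⟩
          _ = n * (2*(n-1)) := by simp [Finset.sum_const, hn, mul_comm]
          _ = 2*(n-1)*n := by ring
        omega
    | succ K ih =>
      intro m hwin hS0 hsum
      set cm := fun z => c0 z + ((m z : ℕ) : ZMod 4) with hcm
      have hIval : ∀ u w, G.Adj u w → ((cm w - cm u).val : ℤ)
          = ((c0 w - c0 u).val : ℤ) + m w - m u := by
        intro u w hadj
        have hwin' := hwin u w hadj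
        have hcast : cm w - cm u = (((((c0 w - c0 u).val : ℤ) + m w - m u) : ℤ) : ZMod 4) := by
          push_cast
          rw [zmod4_val_cast]
          simp only [hcm]
          ring
        rw [hcast, int_val _ (by omega) (by omega)]
      have hproper : Proper G cm := by
        intro u w hadj
        have h1 := hIval u w hadj
        have h2 := hwin u w hadj
        exact zmod4_ne_of_val _ _ (by omega)
      by_cases hall : ∀ v, ∃ u, G.Adj v u ∧ cm u = cm v + 1
      · exact ⟨cm, hproper, hall⟩
      · push_neg at hall
        obtain ⟨v, hv⟩ := hall
        -- v is not in S
        have hvS : v ∉ S := by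
          intro hmem
          obtain ⟨u, huS, huadj, hueq⟩ := hStrap v hmem
          have h1 : m u = 0 := hS0 u huS
          have h2 : m v = 0 := hS0 v hmem
          have : cm u = cm v + 1 := by
            simp only [hcm, h1, h2]
            push_cast
            simpa using hueq
          exact hv u huadj this
        -- bad: for every neighbor u of v : (cm u - cm v).val ≠ 1
        have hbadval : ∀ u, G.Adj v u → ((cm u - cm v).val : ℤ) ≠ 1 := by
          intro u hadj heq
          apply hv u hadj
          rw [zmod4_plus1]
          omega
        refine ih (Function.update m v (m v + 1)) ?_ ?_ ?_
        · -- window invariant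
          intro u w hadj
          have hwin' := hwin u w hadj
          rcases eq_or_ne w v with rfl | hwv
          · -- w = v is incremented; u ≠ v
            have huv : u ≠ w := fun h => (G.loopless.irrefl w (h ▸ hadj))
            rw [Function.update_self, Function.update_of_ne huv]
            -- need old I ≤ 2 : I(u,w) ≠ 3
            have hne3 : ((c0 w - c0 u).val : ℤ) + m w - m u ≠ 3 := by
              intro h3
              have hval := hIval u w hadj
              have h1 := hbadval u hadj.symm
              have hvw := zmod4_ne_val _ _ (hprop u w hadj)
              have hoi : (cm w - cm u).val = 3 := by omega
              have h9 : (cm u - cm w).val = 1 :=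
                (zmod4_one_iff_three (cm w) (cm u)
                  (fun hh => (hproper u w hadj) hh.symm)).2 hoi
              apply h1
              have h10 : ((cm u - cm w).val : ℤ) = 1 := by exact_mod_cast h9
              omega
            omega
          · rcases eq_or_ne u v with rfl | huv
            · -- u = v incremented, w ≠ v
              rw [Function.update_self, Function.update_of_ne hwv]
              -- need old I(u,w) ≥ 2: (cm w - cm u).val ≠ 1
              have hne1 : ((c0 w - c0 u).val : ℤ) + m w - m u ≠ 1 := by
                intro h1
                have hval := hIval u w hadj
                exact hbadval w hadj (by omega)
              omega
            · rw [Function.update_of_ne hwv, Function.update_of_ne huv]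
              omega
        · intro s hs
          have hsv : s ≠ v := by rintro rfl; exact hvS hs
          rw [Function.update_of_ne hsv]
          exact hS0 s hs
        · have hsum' : (∑ w, Function.update m v (m v + 1) w) = (∑ w, m w) + 1 := by
            rw [Finset.sum_update_of_mem (Finset.mem_univ v)]
            have h11 := Finset.sum_erase_add Finset.univ m (Finset.mem_univ v)
            rw [Finset.erase_eq] at h11
            omega
          omega
  -- initialize with m = 0
  refine key (2*(n-1)*n) (fun _ => 0) ?_ ?_ (by simp)
  · intro u w hadj
    have := zmod4_ne_val _ _ (hprop u w hadj)
    push_cast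
    omega
  · intro s _
    rfl


section Assembly
variable {V : Type} [Fintype V] {G : SimpleGraph V}

lemma nat_cast_ne_zmod4 (a b : ℕ) (ha : a < 4) (hb : b < 4) (hne : a ≠ b) :
    (a : ZMod 4) ≠ (b : ZMod 4) := by
  rw [Ne, natCast_zmod4_eq_iff]
  omega

end Assembly

end C4Colorful

/-- Every connected 4-chromatic graph containing a cycle of length 4 admits a
proper 4-coloring in which every vertex begins a path on 4 vertices receiving
all four colors. -/
theorem four_chromatic_C4_colorful {V : Type} [Fintype V] (G : SimpleGraph V)
    (hG : G.Connected) (hχ : G.chromaticNumber = 4)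
    (x₁ x₂ x₃ x₄ : V)
    (hdist : x₁ ≠ x₂ ∧ x₁ ≠ x₃ ∧ x₁ ≠ x₄ ∧ x₂ ≠ x₃ ∧ x₂ ≠ x₄ ∧ x₃ ≠ x₄)
    (hcyc : G.Adj x₁ x₂ ∧ G.Adj x₂ x₃ ∧ G.Adj x₃ x₄ ∧ G.Adj x₄ x₁) :
    ∃ c : V → ZMod 4,
      (∀ u w, G.Adj u w → c u ≠ c w) ∧
      ∀ v : V, ∃ (y : V) (p : G.Walk v y),
        p.support.length = 4 ∧ (p.support.map c).Nodup := by
  classical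
  obtain ⟨hd12, hd13, hd14, hd23, hd24, hd34⟩ := hdist
  obtain ⟨ha12, ha23, ha34, ha41⟩ := hcyc
  have hcol : G.Colorable 4 := by
    have h4 : G.chromaticNumber ≤ ((4:ℕ) : ℕ∞) := by
      rw [hχ]; norm_num
    exact SimpleGraph.chromaticNumber_le_iff_colorable.mp h4
  obtain ⟨C⟩ := hcol
  set c₀ : V → ZMod 4 := fun v => (((C v : Fin 4).val : ℕ) : ZMod 4) with hc₀
  have hprop₀ : C4Colorful.Proper G c₀ := by
    intro u w hadj
    have hCne : C u ≠ C w := C.valid hadj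
    exact C4Colorful.nat_cast_ne_zmod4 _ _ (C u).isLt (C w).isLt
      (fun h => hCne (Fin.ext h))
  -- main : a proper trapped coloring suffices
  have main : ∀ c : V → ZMod 4, C4Colorful.Proper G c → C4Colorful.IsTrap G c →
      (∃ c : V → ZMod 4, (∀ u w, G.Adj u w → c u ≠ c w) ∧
        ∀ v : V, ∃ (y : V) (p : G.Walk v y),
          p.support.length = 4 ∧ (p.support.map c).Nodup) := by
    intro c hp ht
    obtain ⟨d, hdp, hdgood⟩ := C4Colorful.alg G hG c hp ht
    refine ⟨d, fun u w h => hdp u w h, ?_⟩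
    intro v
    obtain ⟨u1, h1, e1⟩ := hdgood v
    obtain ⟨u2, h2, e2⟩ := hdgood u1
    obtain ⟨u3, h3, e3⟩ := hdgood u2
    refine ⟨u3, SimpleGraph.Walk.cons h1 (SimpleGraph.Walk.cons h2
      (SimpleGraph.Walk.cons h3 SimpleGraph.Walk.nil)), ?_, ?_⟩
    · simp
    · have hmap : (SimpleGraph.Walk.cons h1 (SimpleGraph.Walk.cons h2
          (SimpleGraph.Walk.cons h3 SimpleGraph.Walk.nil))).support.map d
          = [d v, d v + 1, d v + 1 + 1, d v + 1 + 1 + 1] := by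
        simp [e1, e2, e3]
      rw [hmap]
      have hnd := C4Colorful.zmod4_nodup (d v)
      have e2' : d v + 1 + 1 = d v + 2 := by ring
      have e3' : d v + 2 + 1 = d v + 3 := by ring
      simp only [e2', e3']
      exact hnd
  -- rainbow on the 4-cycle gives a trap
  have mkTrap : ∀ c : V → ZMod 4, C4Colorful.Proper G c → c x₁ ≠ c x₃ → c x₂ ≠ c x₄ →
      (∃ c : V → ZMod 4, (∀ u w, G.Adj u w → c u ≠ c w) ∧
        ∀ v : V, ∃ (y : V) (p : G.Walk v y),
          p.support.length = 4 ∧ (p.support.map c).Nodup) := by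
    intro c hp h13 h24
    obtain ⟨f, hfinj, hf1, hf2, hf3, hf4⟩ := C4Colorful.zmod4_perm4
      (c x₁) (c x₂) (c x₃) (c x₄)
      (hp _ _ ha12) h13 (fun h => (hp _ _ ha41) h.symm) (hp _ _ ha23) h24 (hp _ _ ha34)
    refine main (f ∘ c) (fun u w h hc => hp u w h (hfinj _ _ hc)) ?_
    refine ⟨{x₁, x₂, x₃, x₄}, ⟨x₁, by simp⟩, ?_⟩
    intro v hv
    simp only [Set.mem_insert_iff, Set.mem_singleton_iff] at hv
    rcases hv with rfl | rfl | rfl | rfl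
    · exact ⟨x₂, by simp, ha12, by
        simp only [Function.comp_apply, hf1, hf2]; decide⟩
    · exact ⟨x₃, by simp, ha23, by
        simp only [Function.comp_apply, hf2, hf3]; decide⟩
    · exact ⟨x₄, by simp, ha34, by
        simp only [Function.comp_apply, hf3, hf4]; decide⟩
    · exact ⟨x₁, by simp, ha41, by
        simp only [Function.comp_apply, hf4, hf1]; decide⟩
  by_cases T0 : C4Colorful.IsTrap G c₀
  · exact main c₀ hprop₀ T0
  have step1 : ∃ c₁ : V → ZMod 4, C4Colorful.Proper G c₁ ∧ c₁ x₁ ≠ c₁ x₃ := by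
    by_cases h13 : c₀ x₁ = c₀ x₃
    · exact C4Colorful.split_one c₀ hprop₀ T0 x₁ x₃ hd13 h13
    · exact ⟨c₀, hprop₀, h13⟩
  obtain ⟨c₁, hp1, h13⟩ := step1
  by_cases T1 : C4Colorful.IsTrap G c₁
  · exact main c₁ hp1 T1
  by_cases h24 : c₁ x₂ = c₁ x₄
  · obtain ⟨f, hfinj, hf0, hf2⟩ := C4Colorful.zmod4_perm2 (c₁ x₁) (c₁ x₃) h13
    have hp2 : C4Colorful.Proper G (f ∘ c₁) := fun u w h hc => hp1 u w h (hfinj _ _ hc)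
    by_cases T2 : C4Colorful.IsTrap G (f ∘ c₁)
    · exact main (f ∘ c₁) hp2 T2
    · have h13' : (f ∘ c₁) x₃ = (f ∘ c₁) x₁ + 2 := by
        simp only [Function.comp_apply, hf0, hf2]; decide
      have h24' : (f ∘ c₁) x₂ = (f ∘ c₁) x₄ := by
        simp only [Function.comp_apply, h24]
      obtain ⟨c₃, hp3, h13'', h24''⟩ :=
        C4Colorful.split_two (f ∘ c₁) hp2 T2 x₁ x₃ x₂ x₄ h13' h24' hd24
      exact mkTrap c₃ hp3 h13'' h24''
  · exact mkTrap c₁ hp1 h13 h24
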